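/- Let D ⊆ ℝⁿ be open, ε₀ > 0, T > 0, and let F : ℝ × D × [0, ε₀] → ℝⁿ be continuous and T-periodic in its first variable. Define f₁(z) = (1/T) ∫₀ᵀ F(s, z, 0) ds. Let z* ∈ D and let V ⊆ ℝⁿ be a bounded open neighbourhood of z* with closure(V) ⊆ D such that f₁(z) ≠ 0 for every z ∈ closure(V) \ {z*}. Then there exists ε₁ ∈ (0, ε₀] such that for every λ ∈ (0, 1] and every ε ∈ (0, ε₁], any T-periodic solution x : ℝ → ℝⁿ of the differential equation x' = ε λ F(t, x, ε) satisfying x(t) ∈ closure(V) for all t in fact satisfies x(t) ∈ V for all t. -/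

import Mathlib

open MeasureTheory

/-- For `ℓ = 1`: an isolated zero `z*` of the first averaged function
`f₁(z) = (1/T) ∫₀ᵀ F(s, z, 0) ds` on `closure V` forces hypothesis (H): there is
`ε₁ ∈ (0, ε₀]` such that for every `λ ∈ (0,1]` and `ε ∈ (0, ε₁]`, any `T`-periodic
solution of `x' = ε λ F(t, x, ε)` contained in `closure V` is contained in `V`. -/
theorem stmt_2 (n : ℕ) (D : Set (EuclideanSpace ℝ (Fin n))) (hD : IsOpen D)
    (ε₀ T : ℝ) (hε₀ : 0 < ε₀) (hT : 0 < T)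
    (F : ℝ → EuclideanSpace ℝ (Fin n) → ℝ → EuclideanSpace ℝ (Fin n))
    (hFcont : ContinuousOn
      (fun p : ℝ × EuclideanSpace ℝ (Fin n) × ℝ => F p.1 p.2.1 p.2.2)
      (Set.univ ×ˢ D ×ˢ Set.Icc 0 ε₀))
    (hFper : ∀ t z e, F (t + T) z e = F t z e)
    (f₁ : EuclideanSpace ℝ (Fin n) → EuclideanSpace ℝ (Fin n))
    (hf₁ : ∀ z, f₁ z = (1 / T) • ∫ s in (0:ℝ)..T, F s z 0)
    (zstar : EuclideanSpace ℝ (Fin n)) (hzD : zstar ∈ D)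
    (V : Set (EuclideanSpace ℝ (Fin n))) (hVopen : IsOpen V)
    (hVbdd : Bornology.IsBounded V) (hzV : zstar ∈ V) (hVD : closure V ⊆ D)
    (hf₁ne : ∀ z ∈ closure V \ {zstar}, f₁ z ≠ 0) :
    ∃ ε₁ ∈ Set.Ioc 0 ε₀, ∀ l ∈ Set.Ioc (0:ℝ) 1, ∀ ε ∈ Set.Ioc (0:ℝ) ε₁,
      ∀ x : ℝ → EuclideanSpace ℝ (Fin n),
        Function.Periodic x T → ContDiff ℝ 1 x → (∀ t, x t ∈ D) →
        (∀ t, HasDerivAt x ((ε * l) • F t (x t) ε) t) →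
        (∀ t, x t ∈ closure V) → ∀ t, x t ∈ V := by
  classical
  -- trivial case: the closure of V meets nothing outside V
  by_cases hC : (closure V \ V) = ∅
  · refine ⟨ε₀, ⟨hε₀, le_refl _⟩, ?_⟩
    intro l hl ε hε x hper hsm hxD hode hxcl t
    by_contra hv
    exact Set.eq_empty_iff_forall_notMem.1 hC (x t) ⟨hxcl t, hv⟩
  -- the compact set of boundary points
  have hclV : IsCompact (closure V) :=
    Metric.isCompact_of_isClosed_isBounded isClosed_closure hVbdd.closure
  set C : Set (EuclideanSpace ℝ (Fin n)) := closure V \ V with hCdef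
  have hCclosed : IsClosed C := isClosed_closure.sdiff hVopen
  have hCcomp : IsCompact C := hclV.of_isClosed_subset hCclosed Set.diff_subset
  have hCne : C.Nonempty := Set.nonempty_iff_ne_empty.2 hC
  -- compact set K on which F is bounded and uniformly continuous
  set K : Set (ℝ × EuclideanSpace ℝ (Fin n) × ℝ) :=
    Set.Icc 0 T ×ˢ closure V ×ˢ Set.Icc 0 ε₀ with hKdef
  have hKcomp : IsCompact K := (isCompact_Icc.prod (hclV.prod isCompact_Icc))
  have hKsub : K ⊆ Set.univ ×ˢ D ×ˢ Set.Icc 0 ε₀ := by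
    rintro ⟨s, z, e⟩ ⟨hs, hz, he⟩
    exact ⟨trivial, hVD hz, he⟩
  have hFK : ContinuousOn
      (fun p : ℝ × EuclideanSpace ℝ (Fin n) × ℝ => F p.1 p.2.1 p.2.2) K :=
    hFcont.mono hKsub
  obtain ⟨M₀, hM₀⟩ := hKcomp.exists_bound_of_continuousOn hFK
  set M : ℝ := max M₀ 0 with hMdef
  have hM0 : 0 ≤ M := le_max_right _ _
  have hMK : ∀ p ∈ K, ‖F p.1 p.2.1 p.2.2‖ ≤ M := fun p hp =>
    (hM₀ p hp).trans (le_max_left _ _)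
  -- bound on F for all times, via periodicity
  have hFbound : ∀ u : ℝ, ∀ w ∈ closure V, ∀ e ∈ Set.Icc 0 ε₀, ‖F u w e‖ ≤ M := by
    intro u w hw e he
    have hper' : Function.Periodic (fun t => F t w e) T := fun t => hFper t w e
    have h1 : (0:ℝ) ≤ u - ⌊u / T⌋ * T := Int.sub_floor_div_mul_nonneg u hT
    have h2 : u - ⌊u / T⌋ * T < T := Int.sub_floor_div_mul_lt u hT
    have heq : F (u - ⌊u / T⌋ * T) w e = F u w e := hper'.sub_int_mul_eq ⌊u / T⌋
    calc ‖F u w e‖ = ‖F (u - ⌊u / T⌋ * T) w e‖ := by rw [heq]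
      _ ≤ M := hMK (u - ⌊u / T⌋ * T, w, e) ⟨⟨h1, h2.le⟩, hw, he⟩
  -- continuity in the time variable for fixed (z, e)
  have hFtime : ∀ z ∈ D, ∀ e ∈ Set.Icc 0 ε₀, Continuous fun s => F s z e := by
    intro z hz e he
    rw [← continuousOn_univ]
    exact hFcont.comp ((continuous_id.prodMk
      (continuous_const.prodMk continuous_const)).continuousOn)
      (fun s _ => ⟨trivial, hz, he⟩)
  -- continuity of f₁ on closure V
  have hUC := hKcomp.uniformContinuousOn_of_continuous hFK
  have hf₁cont : ContinuousOn f₁ (closure V) := by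
    rw [Metric.continuousOn_iff]
    intro z hz r hr
    obtain ⟨η, hη, hηU⟩ := Metric.uniformContinuousOn_iff.1 hUC (r / 2) (by linarith)
    refine ⟨η, hη, fun z' hz' hd => ?_⟩
    have hint : ∀ w ∈ closure V, IntervalIntegrable (fun s => F s w 0) volume 0 T :=
      fun w hw => ((hFtime w (hVD hw) 0 ⟨le_refl _, hε₀.le⟩)).intervalIntegrable 0 T
    have hdiff : ‖(∫ s in (0:ℝ)..T, F s z' 0) - ∫ s in (0:ℝ)..T, F s z 0‖
        ≤ (r / 2) * |T - 0| := by
      rw [← intervalIntegral.integral_sub (hint z' hz') (hint z hz)]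
      refine intervalIntegral.norm_integral_le_of_norm_le_const fun s hs => ?_
      have hsIcc : s ∈ Set.Icc 0 T := by
        rw [Set.uIoc_of_le hT.le] at hs
        exact ⟨hs.1.le, hs.2⟩
      have hp : ((s, z', 0) : ℝ × EuclideanSpace ℝ (Fin n) × ℝ) ∈ K :=
        ⟨hsIcc, hz', le_refl _, hε₀.le⟩
      have hq : ((s, z, 0) : ℝ × EuclideanSpace ℝ (Fin n) × ℝ) ∈ K :=
        ⟨hsIcc, hz, le_refl _, hε₀.le⟩
      have hdpq : dist ((s, z', 0) : ℝ × EuclideanSpace ℝ (Fin n) × ℝ) (s, z, 0) < η := by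
        simp only [Prod.dist_eq, dist_self]
        simp only [max_lt_iff]
        exact ⟨hη, hd, hη⟩
      have := hηU (s, z', 0) hp (s, z, 0) hq hdpq
      rw [dist_eq_norm] at this
      exact this.le
    have : dist (f₁ z') (f₁ z) ≤ r / 2 := by
      rw [dist_eq_norm, hf₁ z', hf₁ z, ← smul_sub, norm_smul]
      have h1T : ‖(1:ℝ) / T‖ = 1 / T := by
        rw [Real.norm_eq_abs, abs_of_pos (by positivity)]
      rw [h1T]
      calc (1 / T) * ‖(∫ s in (0:ℝ)..T, F s z' 0) - ∫ s in (0:ℝ)..T, F s z 0‖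
          ≤ (1 / T) * ((r / 2) * |T - 0|) := by
            apply mul_le_mul_of_nonneg_left hdiff (by positivity)
        _ = r / 2 := by
            rw [sub_zero, abs_of_pos hT]; field_simp
    linarith
  -- minimum of ‖f₁‖ on C
  obtain ⟨z₀, hz₀C, hz₀min'⟩ := hCcomp.exists_isMinOn hCne
    ((hf₁cont.mono (Set.diff_subset)).norm)
  have hz₀min : ∀ w ∈ C, ‖f₁ z₀‖ ≤ ‖f₁ w‖ := fun w hw => hz₀min' hw
  set δ : ℝ := ‖f₁ z₀‖ with hδdef
  have hδpos : 0 < δ := by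
    have hne : f₁ z₀ ≠ 0 := hf₁ne z₀ ⟨hz₀C.1, fun h => hz₀C.2 (h ▸ hzV)⟩
    exact norm_pos_iff.2 hne
  -- uniform continuity modulus for δ/2
  obtain ⟨η, hη, hηU⟩ := Metric.uniformContinuousOn_iff.1 hUC (δ / 2) (by linarith)
  -- choose ε₁
  refine ⟨min ε₀ (η / (M * T + 2)), ⟨lt_min hε₀ (by positivity), min_le_left _ _⟩, ?_⟩
  intro l hl ε hε x hper hsm hxD hode hxcl
  -- key bounds on ε
  have hε0' : 0 < ε := hε.1
  have hεε₀ : ε ≤ ε₀ := hε.2.trans (min_le_left _ _)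
  have hεη : ε ≤ η / (M * T + 2) := hε.2.trans (min_le_right _ _)
  have hεMT : ε * (M * T) < η := by
    have h2 : 0 < M * T + 2 := by positivity
    have := mul_le_mul_of_nonneg_right hεη (by positivity : (0:ℝ) ≤ M * T)
    calc ε * (M * T) ≤ η / (M * T + 2) * (M * T) := this
      _ < η := by
          rw [div_mul_eq_mul_div, div_lt_iff₀ h2]
          nlinarith [mul_nonneg hM0 hT.le]
  have hεltη : ε < η := by
    have : η / (M * T + 2) < η := by
      rw [div_lt_iff₀ (by positivity)]
      nlinarith [mul_nonneg hM0 hT.le]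
    linarith
  intro t
  by_contra hv
  -- reduce to a time in [0, T)
  set t' : ℝ := t - ⌊t / T⌋ * T with ht'def
  have ht'0 : (0:ℝ) ≤ t' := Int.sub_floor_div_mul_nonneg t hT
  have ht'T : t' < T := Int.sub_floor_div_mul_lt t hT
  have hxt' : x t' = x t := hper.sub_int_mul_eq ⌊t / T⌋
  set z : EuclideanSpace ℝ (Fin n) := x t' with hzdef
  have hzC : z ∈ C := by rw [hxt']; exact ⟨hxcl t, hv⟩
  -- the derivative function is bounded and continuous
  have hεIcc : ε ∈ Set.Icc 0 ε₀ := ⟨hε0'.le, hεε₀⟩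
  have hxcont : Continuous x := hsm.continuous
  have hgcont : Continuous fun u => (ε * l) • F u (x u) ε := by
    refine Continuous.smul (f := fun _ => ε * l) (g := fun u => F u (x u) ε) continuous_const ?_
    rw [← continuousOn_univ]
    exact hFcont.comp ((continuous_id.prodMk
      (hxcont.prodMk continuous_const)).continuousOn)
      (fun s _ => ⟨trivial, hxD s, hεIcc⟩)
  have hgbound : ∀ u : ℝ, ‖(ε * l) • F u (x u) ε‖ ≤ ε * M := by
    intro u
    rw [norm_smul, Real.norm_eq_abs, abs_of_pos (mul_pos hε0' hl.1)]
    calc ε * l * ‖F u (x u) ε‖ ≤ ε * 1 * M :=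
        mul_le_mul (by nlinarith [hl.2]) (hFbound u (x u) (hxcl u) ε hεIcc)
          (norm_nonneg _) (by positivity)
      _ = ε * M := by ring
  -- oscillation bound: x stays within ε M T of z on [0, T]
  have hosc : ∀ s ∈ Set.Icc (0:ℝ) T, ‖z - x s‖ ≤ ε * (M * T) := by
    intro s hs
    have hftc : x s - x t' = ∫ u in t'..s, (ε * l) • F u (x u) ε :=
      (intervalIntegral.integral_eq_sub_of_hasDerivAt
        (fun u _ => hode u) (hgcont.intervalIntegrable t' s)).symm
    have hnorm : ‖x s - x t'‖ ≤ (ε * M) * |s - t'| := by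
      rw [hftc]
      exact intervalIntegral.norm_integral_le_of_norm_le_const fun u _ => hgbound u
    have habs : |s - t'| ≤ T := by
      rw [abs_sub_le_iff]
      constructor <;> [linarith [hs.1, hs.2, ht'0, ht'T]; linarith [hs.1, hs.2, ht'0, ht'T]]
    calc ‖z - x s‖ = ‖x s - x t'‖ := by rw [hzdef, norm_sub_rev]
      _ ≤ (ε * M) * |s - t'| := hnorm
      _ ≤ (ε * M) * T := mul_le_mul_of_nonneg_left habs (by positivity)
      _ = ε * (M * T) := by ring
  -- the integral of F along the solution over a period vanishes
  have hFxcont : Continuous fun u => F u (x u) ε := by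
    rw [← continuousOn_univ]
    exact hFcont.comp ((continuous_id.prodMk
      (hxcont.prodMk continuous_const)).continuousOn)
      (fun s _ => ⟨trivial, hxD s, hεIcc⟩)
  have hzero : (∫ u in (0:ℝ)..T, F u (x u) ε) = 0 := by
    have hftc : x T - x 0 = ∫ u in (0:ℝ)..T, (ε * l) • F u (x u) ε :=
      (intervalIntegral.integral_eq_sub_of_hasDerivAt
        (fun u _ => hode u) (hgcont.intervalIntegrable 0 T)).symm
    have hxT : x T = x 0 := by
      have := hper 0
      rwa [zero_add] at this
    have : (ε * l) • (∫ u in (0:ℝ)..T, F u (x u) ε) = 0 := by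
      rw [← intervalIntegral.integral_smul]
      rw [← hftc, hxT, sub_self]
    exact (smul_eq_zero.1 this).resolve_left (ne_of_gt (mul_pos hε0' hl.1))
  -- estimate f₁ z
  have hzclV : z ∈ closure V := hzC.1
  have hintz : IntervalIntegrable (fun s => F s z 0) volume 0 T :=
    (hFtime z (hVD hzclV) 0 ⟨le_refl _, hε₀.le⟩).intervalIntegrable 0 T
  have hdiff : ‖∫ s in (0:ℝ)..T, F s z 0‖ ≤ (δ / 2) * |T - 0| := by
    have heq : (∫ s in (0:ℝ)..T, F s z 0)
        = ∫ s in (0:ℝ)..T, (F s z 0 - F s (x s) ε) := by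
      rw [intervalIntegral.integral_sub hintz (hFxcont.intervalIntegrable 0 T), hzero,
        sub_zero]
    rw [heq]
    refine intervalIntegral.norm_integral_le_of_norm_le_const fun s hs => ?_
    have hsIcc : s ∈ Set.Icc 0 T := by
      rw [Set.uIoc_of_le hT.le] at hs
      exact ⟨hs.1.le, hs.2⟩
    have hp : ((s, z, 0) : ℝ × EuclideanSpace ℝ (Fin n) × ℝ) ∈ K :=
      ⟨hsIcc, hzclV, le_refl _, hε₀.le⟩
    have hq : ((s, x s, ε) : ℝ × EuclideanSpace ℝ (Fin n) × ℝ) ∈ K :=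
      ⟨hsIcc, hxcl s, hεIcc⟩
    have hdpq : dist ((s, z, 0) : ℝ × EuclideanSpace ℝ (Fin n) × ℝ) (s, x s, ε) < η := by
      simp only [Prod.dist_eq, dist_self, max_lt_iff]
      refine ⟨hη, ?_, ?_⟩
      · rw [dist_eq_norm]
        exact lt_of_le_of_lt (hosc s hsIcc) hεMT
      · rw [Real.dist_eq, abs_of_nonpos (by linarith), neg_sub, sub_zero]
        exact hεltη
    have := hηU (s, z, 0) hp (s, x s, ε) hq hdpq
    rw [dist_eq_norm] at this
    exact this.le
  have hf₁z : ‖f₁ z‖ ≤ δ / 2 := by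
    rw [hf₁ z, norm_smul, Real.norm_eq_abs, abs_of_pos (by positivity : (0:ℝ) < 1 / T)]
    calc (1 / T) * ‖∫ s in (0:ℝ)..T, F s z 0‖ ≤ (1 / T) * ((δ / 2) * |T - 0|) :=
        mul_le_mul_of_nonneg_left hdiff (by positivity)
      _ = δ / 2 := by rw [sub_zero, abs_of_pos hT]; field_simp
  have : δ ≤ ‖f₁ z‖ := hz₀min z hzC
  linarith
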